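/- Let K be a field and r ≥ 1. The standard polynomial St_{2r} of degree 2r is a polynomial identity of UT_r(K) but is not a polynomial identity of UT_{r+1}(K). -/

import Mathlib

/-- Evaluation of the standard polynomial `St_m = ∑ σ, sgn(σ) x_{σ(1)} ⋯ x_{σ(m)}`
at the tuple `a` of elements of the `K`-algebra `A`. -/
noncomputable def stdEval {K A : Type*} [Field K] [Ring A] [Algebra K A]
    (m : ℕ) (a : Fin m → A) : A :=
  ∑ σ : Equiv.Perm (Fin m), ((Equiv.Perm.sign σ : ℤ) : K) • (List.ofFn fun i => a (σ i)).prod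

/-- `M` is an upper triangular matrix, i.e. an element of `UT_n(K)`. -/
def IsUT {K : Type*} [Field K] {n : ℕ} (M : Matrix (Fin n) (Fin n) K) : Prop :=
  ∀ i j : Fin n, (j : ℕ) < (i : ℕ) → M i j = 0

def pathOf {n m : ℕ} (i : Fin n) (q : Fin m → Fin n) : Fin (m+1) → Fin n := Fin.cons i q

@[simp] lemma pathOf_zero {n m : ℕ} (i : Fin n) (q : Fin m → Fin n) : pathOf i q 0 = i := rfl
@[simp] lemma pathOf_succ {n m : ℕ} (i : Fin n) (q : Fin m → Fin n) (k : Fin m) :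
    pathOf i q k.succ = q k := by simp [pathOf]

lemma path_expand {K : Type*} [Field K] {n : ℕ} :
    ∀ (m : ℕ) (M : Fin m → Matrix (Fin n) (Fin n) K) (i j : Fin n),
      (List.ofFn M).prod i j =
        ∑ q : Fin m → Fin n,
          if pathOf i q (Fin.last m) = j then
            ∏ k : Fin m, M k (pathOf i q k.castSucc) (q k)
          else 0 := by
  intro m
  induction m with
  | zero =>
    intro M i j
    rw [Finset.sum_unique_nonempty]
    · simp [Matrix.one_apply, Fin.last, pathOf]
    · exact Finset.univ_nonempty
  | succ m ih =>
    intro M i j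
    rw [List.ofFn_succ, List.prod_cons, Matrix.mul_apply]
    have hre : ∀ x, (List.ofFn fun k : Fin m => M k.succ).prod x j =
        ∑ q : Fin m → Fin n,
          if pathOf x q (Fin.last m) = j then
            ∏ k : Fin m, M k.succ (pathOf x q k.castSucc) (q k)
          else 0 := fun x => ih _ x j
    simp_rw [hre]
    rw [← Equiv.sum_comp (Fin.consEquiv fun _ => Fin n)]
    rw [Fintype.sum_prod_type]
    apply Finset.sum_congr rfl
    intro x _
    rw [Finset.mul_sum]
    apply Finset.sum_congr rfl
    intro q _
    rw [mul_ite, mul_zero]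
    have hq : (Fin.consEquiv fun _ => Fin n) (x, q) = pathOf x q := rfl
    rw [hq]
    have hc : pathOf i (pathOf x q) (Fin.last (m+1)) = pathOf x q (Fin.last m) := by
      rw [show Fin.last (m+1) = (Fin.last m).succ from rfl, pathOf_succ]
    rw [hc]
    congr 1
    rw [Fin.prod_univ_succ]
    congr 1

lemma chain_entry {K : Type*} [Field K] {n : ℕ} :
    ∀ (m : ℕ) (g : Fin (m+1) → Fin n),
      (List.ofFn fun k : Fin m =>
          Matrix.single (g k.castSucc) (g k.succ) (1:K)).prod (g 0) (g (Fin.last m))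
        = 1 := by
  intro m
  induction m with
  | zero =>
    intro g
    simp [Fin.last, Matrix.one_apply]
  | succ m ih =>
    intro g
    rw [List.ofFn_succ, List.prod_cons]
    rw [show ((0 : Fin (m+1)).castSucc) = (0 : Fin (m+2)) from rfl]
    rw [Matrix.single_mul_apply_same, one_mul]
    have h2 : (List.ofFn fun k : Fin m =>
        Matrix.single (g k.succ.castSucc) (g k.succ.succ) (1:K)) =
        (List.ofFn fun k : Fin m =>
          Matrix.single ((g ∘ Fin.succ) k.castSucc) ((g ∘ Fin.succ) k.succ) (1:K)) := rfl
    rw [h2]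
    have := ih (g ∘ Fin.succ)
    simpa [Fin.last, Function.comp] using this


lemma perm_eq_one_of_consec {N : ℕ} (σ : Equiv.Perm (Fin N))
    (h : ∀ k k' : Fin N, (k' : ℕ) = (k : ℕ) + 1 → (σ k : ℕ) < (σ k' : ℕ)) : σ = 1 := by
  have key : ∀ d : ℕ, ∀ a b : Fin N, (b : ℕ) = (a : ℕ) + d + 1 → (σ a : ℕ) < (σ b : ℕ) := by
    intro d
    induction d with
    | zero => intro a b hb; exact h a b (by omega)
    | succ d ih =>
      intro a b hb
      have hc : (a : ℕ) + d + 1 < N := by have := b.isLt; omega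
      exact (ih a ⟨_, hc⟩ rfl).trans (h ⟨_, hc⟩ b (by simp; omega))
  have hmono : StrictMono σ := by
    intro x y hxy
    rw [Fin.lt_def]
    exact key ((y : ℕ) - (x : ℕ) - 1) x y (by have := Fin.lt_def.mp hxy; omega)
  have hle : ∀ (g : Equiv.Perm (Fin N)), StrictMono g → ∀ t : Fin N, (t : ℕ) ≤ (g t : ℕ) := by
    intro g hg
    have main : ∀ v : ℕ, ∀ hv : v < N, v ≤ ((g ⟨v, hv⟩ : Fin N) : ℕ) := by
      intro v
      induction v with
      | zero => intro hv; exact Nat.zero_le _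
      | succ v ih =>
        intro hv
        have h1 : (⟨v, by omega⟩ : Fin N) < ⟨v+1, hv⟩ := by simp [Fin.lt_def]
        have h2 := Fin.lt_def.mp (hg h1)
        have h3 := ih (by omega)
        omega
    intro t
    have := main t.val t.isLt
    simpa using this
  have hmono' : StrictMono (σ⁻¹ : Equiv.Perm (Fin N)) := by
    intro x y hxy
    rcases lt_trichotomy ((σ⁻¹ : Equiv.Perm (Fin N)) x) ((σ⁻¹ : Equiv.Perm (Fin N)) y)
      with h' | h' | h'
    · exact h'
    · exact absurd (by rw [← show σ (σ⁻¹ x) = x from σ.apply_symm_apply x, ← show σ (σ⁻¹ y) = y from σ.apply_symm_apply y, h'])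
        (ne_of_lt hxy)
    · exact absurd (by simpa using hmono h') (not_lt_of_gt hxy)
  apply Equiv.ext
  intro t
  have h1 := hle σ hmono t
  have h2 := hle σ⁻¹ hmono' (σ t)
  rw [show σ⁻¹ (σ t) = t from σ.symm_apply_apply t] at h2
  simp only [Equiv.Perm.one_apply]
  exact Fin.ext (by omega)

lemma part1 {K : Type*} [Field K] (r : ℕ) (hr : 1 ≤ r)
    (a : Fin (2 * r) → Matrix (Fin r) (Fin r) K) (ha : ∀ l, IsUT (a l)) :
    stdEval (K := K) (2 * r) a = 0 := by
  haveI : NeZero r := ⟨by omega⟩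
  ext i j
  rw [stdEval, Matrix.sum_apply, Matrix.zero_apply]
  simp_rw [Matrix.smul_apply, smul_eq_mul]
  have hpe := path_expand (K := K) (n := r) (2*r)
  simp_rw [hpe, Finset.mul_sum]
  rw [Finset.sum_comm]
  apply Finset.sum_eq_zero
  intro q _
  by_cases hcond : pathOf i q (Fin.last (2*r)) = j
  swap
  · simp [hcond]
  simp only [if_pos hcond]
  set P : Fin (2*r+1) → Fin r := pathOf i q with hP
  by_cases hmono : ∀ k : Fin (2*r), P k.castSucc ≤ q k
  swap
  · push_neg at hmono
    obtain ⟨k, hk⟩ := hmono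
    apply Finset.sum_eq_zero
    intro σ _
    rw [Finset.prod_eq_zero (Finset.mem_univ k), mul_zero]
    exact ha (σ k) _ _ (Fin.lt_def.mp hk)
  · -- path is monotone
    have hPm : Monotone P := by
      rw [Fin.monotone_iff_le_succ]
      intro k
      simpa [hP] using hmono k
    -- strict steps are few
    set T : Finset (Fin (2*r)) := Finset.univ.filter (fun k => ¬ P k.castSucc = q k) with hT
    have hTcard : T.card ≤ r - 1 := by
      have hinj : Set.InjOn q T := by
        intro k hk l hl hkl
        by_contra hne
        rcases lt_or_gt_of_ne hne with h | h
        · have h1 : P k.castSucc < q k :=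
            lt_of_le_of_ne (hmono k) (by simpa [hT] using hk)
          have h2 : P l.castSucc < q l :=
            lt_of_le_of_ne (hmono l) (by simpa [hT] using hl)
          have h3 : q k = P k.succ := by simp [hP]
          have h4 : k.succ ≤ l.castSucc := by
            rw [Fin.le_def]; simp; omega
          have := lt_of_le_of_lt (h3 ▸ hPm h4) h2
          exact absurd hkl (ne_of_lt this)
        · have h1 : P k.castSucc < q k :=
            lt_of_le_of_ne (hmono k) (by simpa [hT] using hk)
          have h2 : P l.castSucc < q l :=
            lt_of_le_of_ne (hmono l) (by simpa [hT] using hl)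
          have h3 : q l = P l.succ := by simp [hP]
          have h4 : l.succ ≤ k.castSucc := by
            rw [Fin.le_def]; simp; omega
          have := lt_of_le_of_lt (h3 ▸ hPm h4) h1
          exact absurd hkl.symm (ne_of_lt this)
      have hmaps : ∀ k ∈ T, q k ∈ Finset.univ.erase (0 : Fin r) := by
        intro k hk
        refine Finset.mem_erase.mpr ⟨?_, Finset.mem_univ _⟩
        have h1 : P k.castSucc < q k :=
          lt_of_le_of_ne (hmono k) (by simpa [hT] using hk)
        intro h0
        rw [h0, Fin.lt_def, Fin.val_zero] at h1
        omega
      have := Finset.card_le_card_of_injOn q hmaps hinj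
      rwa [Finset.card_erase_of_mem (Finset.mem_univ _), Finset.card_univ,
        Fintype.card_fin] at this
    -- flat steps: pigeonhole
    set S : Finset (Fin (2*r)) := Finset.univ.filter (fun k => P k.castSucc = q k) with hS
    have hSsum : S.card + T.card = 2 * r := by
      rw [hS, hT, Finset.card_filter_add_card_filter_not]
      simp
    have hScard : r < S.card := by omega
    obtain ⟨k, hkS, l, hlS, hkl, hql⟩ :=
      Finset.exists_ne_map_eq_of_card_lt_of_maps_to
        (by rwa [Finset.card_univ, Fintype.card_fin]) (fun k _ => Finset.mem_univ (q k))
    have hkflat : P k.castSucc = q k := by simpa [hS] using hkS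
    have hlflat : P l.castSucc = q l := by simpa [hS] using hlS
    -- pairing involution
    apply Finset.sum_ninvolution (fun σ => σ * Equiv.swap k l)
    · intro σ
      have hsign : ((Equiv.Perm.sign (σ * Equiv.swap k l) : ℤ) : K)
          = -((Equiv.Perm.sign σ : ℤ) : K) := by
        rw [Equiv.Perm.sign_mul, Equiv.Perm.sign_swap hkl]
        push_cast
        ring
      have hprod : (∏ t : Fin (2*r), a ((σ * Equiv.swap k l) t) (P t.castSucc) (q t))
          = ∏ t : Fin (2*r), a (σ t) (P t.castSucc) (q t) := by
        have key : ∀ t : Fin (2*r),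
            a (σ (Equiv.swap k l t)) (P ((Equiv.swap k l t)).castSucc) (q (Equiv.swap k l t))
              = a (σ (Equiv.swap k l t)) (P t.castSucc) (q t) := by
          intro t
          rcases eq_or_ne t k with rfl | htk
          · rw [Equiv.swap_apply_left, hkflat, hlflat, hql]
          rcases eq_or_ne t l with rfl | htl
          · rw [Equiv.swap_apply_right, hkflat, hlflat, hql]
          · rw [Equiv.swap_apply_of_ne_of_ne htk htl]
        calc (∏ t : Fin (2*r), a ((σ * Equiv.swap k l) t) (P t.castSucc) (q t))
            = ∏ t : Fin (2*r),
                a (σ (Equiv.swap k l t)) (P ((Equiv.swap k l t)).castSucc)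
                  (q (Equiv.swap k l t)) := by
              apply Finset.prod_congr rfl
              intro t _
              rw [key t]
              rfl
          _ = ∏ t : Fin (2*r), a (σ t) (P t.castSucc) (q t) :=
              Equiv.prod_comp (Equiv.swap k l) (fun t => a (σ t) (P t.castSucc) (q t))
      rw [hsign, hprod]
      ring
    · intro σ _ h
      have h2 : σ * Equiv.swap k l = σ * 1 := by rw [mul_one]; exact h
      exact hkl (Equiv.swap_eq_one_iff.mp (mul_left_cancel h2))
    · intro σ; exact Finset.mem_univ _
    · intro σ
      rw [mul_assoc, Equiv.swap_mul_self, mul_one]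

lemma part2 {K : Type*} [Field K] (r : ℕ) (hr : 1 ≤ r) :
    ¬ ∀ a : Fin (2 * r) → Matrix (Fin (r + 1)) (Fin (r + 1)) K,
        (∀ l, IsUT (a l)) → stdEval (K := K) (2 * r) a = 0 := by
  intro h
  have hlt : ∀ l : Fin (2*r), (l : ℕ)/2 < r + 1 := fun l => by have := l.isLt; omega
  have hlt' : ∀ l : Fin (2*r), ((l : ℕ)+1)/2 < r + 1 := fun l => by have := l.isLt; omega
  set a : Fin (2*r) → Matrix (Fin (r+1)) (Fin (r+1)) K := fun l =>
    Matrix.single ⟨(l : ℕ)/2, hlt l⟩ ⟨((l : ℕ)+1)/2, hlt' l⟩ 1 with ha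
  have hUT : ∀ l, IsUT (a l) := by
    intro l i j hji
    by_cases hc : (⟨(l : ℕ)/2, hlt l⟩ : Fin (r+1)) = i ∧ (⟨((l : ℕ)+1)/2, hlt' l⟩ : Fin (r+1)) = j
    · exfalso
      obtain ⟨h1, h2⟩ := hc
      rw [← h1, ← h2] at hji
      simp at hji
      omega
    · exact Matrix.single_apply_of_ne _ _ _ _ _ hc
  have h0 := h a hUT
  set g : Fin (2*r+1) → Fin (r+1) := fun t => ⟨(t : ℕ)/2, by have := t.isLt; omega⟩ with hg
  have hone : ∀ k : Fin (2*r), a k = Matrix.single (g k.castSucc) (g k.succ) 1 :=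
    fun k => rfl
  have hid : (List.ofFn fun k : Fin (2*r) => a k).prod (g 0) (g (Fin.last (2*r))) = 1 := by
    simp_rw [hone]
    exact chain_entry (2*r) g
  have hzero : ∀ σ : Equiv.Perm (Fin (2*r)), σ ≠ 1 →
      (List.ofFn fun k => a (σ k)).prod (g 0) (g (Fin.last (2*r))) = 0 := by
    intro σ hσ
    rw [path_expand (2*r) (fun k => a (σ k)) (g 0) (g (Fin.last (2*r)))]
    apply Finset.sum_eq_zero
    intro q _
    rw [ite_eq_right_iff]
    intro hcond
    by_contra hne
    have hfac := Finset.prod_ne_zero_iff.mp hne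
    have hkey : ∀ k : Fin (2*r),
        (⟨((σ k : ℕ))/2, hlt (σ k)⟩ : Fin (r+1)) = pathOf (g 0) q k.castSucc ∧
        (⟨((σ k : ℕ)+1)/2, hlt' (σ k)⟩ : Fin (r+1)) = q k := by
      intro k
      by_contra hc
      exact hfac k (Finset.mem_univ k) (Matrix.single_apply_of_ne _ _ _ _ _ hc)
    apply hσ
    apply perm_eq_one_of_consec
    intro k k' hk'
    have h1 := (hkey k).2
    have h2 := (hkey k').1
    have hsucc : pathOf (g 0) q k'.castSucc = q k := by
      rw [show k'.castSucc = k.succ from Fin.ext (by simp [hk'])]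
      exact pathOf_succ _ _ _
    rw [hsucc, ← h1] at h2
    have hvals : ((σ k' : ℕ))/2 = ((σ k : ℕ)+1)/2 := congrArg Fin.val h2
    have hne' : (σ k : ℕ) ≠ (σ k' : ℕ) := by
      intro he
      have hkk : k = k' := σ.injective (Fin.ext he)
      rw [hkk] at hk'
      omega
    omega
  have hsum : stdEval (K := K) (2*r) a (g 0) (g (Fin.last (2*r))) = 1 := by
    rw [stdEval, Matrix.sum_apply]
    simp_rw [Matrix.smul_apply, smul_eq_mul]
    rw [Finset.sum_eq_single (1 : Equiv.Perm (Fin (2*r)))]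
    · have he : (fun k : Fin (2*r) => a ((1 : Equiv.Perm (Fin (2*r))) k)) = fun k => a k := rfl
      rw [he, hid]
      simp
    · intro σ _ hσ
      rw [hzero σ hσ, mul_zero]
    · intro hmem
      exact absurd (Finset.mem_univ _) hmem
  rw [h0] at hsum
  simp at hsum

/-- The standard polynomial `St_{2r}` is a polynomial identity of `UT_r(K)` but not of
`UT_{r+1}(K)`. -/
theorem standard_poly_even_identity_UT {K : Type*} [Field K] (r : ℕ) (hr : 1 ≤ r) :
    (∀ a : Fin (2 * r) → Matrix (Fin r) (Fin r) K,
        (∀ l, IsUT (a l)) → stdEval (K := K) (2 * r) a = 0) ∧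
      ¬ ∀ a : Fin (2 * r) → Matrix (Fin (r + 1)) (Fin (r + 1)) K,
          (∀ l, IsUT (a l)) → stdEval (K := K) (2 * r) a = 0 :=
  ⟨fun a ha => part1 r hr a ha, part2 r hr⟩
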